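/- Let f_θ be a differentiable model and θ' a parameter point with f(·;θ') = f*. If the sample size n < rank_{f_θ}(θ'), then for every n-sample dataset sampled from f*, f* has no LLR-guarantee at θ'. Conversely, if n ≥ rank_{f_θ}(θ'), there exist inputs x_1, …, x_n such that f* has LLR-guarantee at θ' from S = {(x_i, f*(x_i))}. -/
import Mathlib


open scoped BigOperators

section Core

variable {α : Type*} {ι : Type*} [Fintype ι] [DecidableEq ι]

/-- Partial derivative of the model output w.r.t. parameter `i`, as a function of the input. -/
noncomputable def pgrad (f : α → (ι → ℝ) → ℝ) (θ : ι → ℝ) (i : ι) : α → ℝ :=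
  fun x => fderiv ℝ (f x) θ (Pi.single i 1)

/-- The tangent function hyperplane at parameter `θ`. -/
noncomputable def tangentSet (f : α → (ι → ℝ) → ℝ) (θ : ι → ℝ) : Set (α → ℝ) :=
  {g | ∃ a : ι → ℝ, g = fun x => f x θ + ∑ i, a i * pgrad f θ i x}

/-- A continuously differentiable distance-type loss. -/
def IsDistanceLoss (ℓ : ℝ → ℝ → ℝ) : Prop :=
  ContDiff ℝ 1 (Function.uncurry ℓ) ∧ ∀ y y' : ℝ, 0 ≤ ℓ y y' ∧ (ℓ y y' = 0 ↔ y = y')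

/-- The empirical loss of `g` on the dataset sampled from `fstar` at inputs `X`. -/
noncomputable def empLoss (ℓ : ℝ → ℝ → ℝ) {n : ℕ} (X : Fin n → α) (fstar g : α → ℝ) : ℝ :=
  (1 / n : ℝ) * ∑ i, ℓ (g (X i)) (fstar (X i))

/-- `fstar` has LLR-guarantee at `θ` from the dataset with inputs `X`:
`fstar` is the unique minimizer of the empirical loss over the tangent hyperplane at `θ`. -/
def LLRAt (ℓ : ℝ → ℝ → ℝ) (f : α → (ι → ℝ) → ℝ) (θ : ι → ℝ)
    {n : ℕ} (X : Fin n → α) (fstar : α → ℝ) : Prop :=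
  fstar ∈ tangentSet f θ ∧
  (∀ h ∈ tangentSet f θ, empLoss ℓ X fstar fstar ≤ empLoss ℓ X fstar h) ∧
  (∀ g ∈ tangentSet f θ,
    (∀ h ∈ tangentSet f θ, empLoss ℓ X fstar g ≤ empLoss ℓ X fstar h) → g = fstar)

/-- `fstar` has an `n`-sample LLR-guarantee. -/
def HasLLR (ℓ : ℝ → ℝ → ℝ) (f : α → (ι → ℝ) → ℝ) (fstar : α → ℝ) (n : ℕ) : Prop :=
  ∃ X : Fin n → α, ∃ θ : ι → ℝ, (fun x => f x θ) = fstar ∧ LLRAt ℓ f θ X fstar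

/-- Model rank at a parameter point: dimension of the span of the tangent functions. -/
noncomputable def modelRankAt (f : α → (ι → ℝ) → ℝ) (θ : ι → ℝ) : ℕ :=
  Module.finrank ℝ (Submodule.span ℝ (Set.range (pgrad f θ)))

/-- Model rank of a function: minimum model rank over parameters representing it. -/
noncomputable def modelRank (f : α → (ι → ℝ) → ℝ) (fstar : α → ℝ) : ℕ :=
  sInf {r | ∃ θ : ι → ℝ, (fun x => f x θ) = fstar ∧ modelRankAt f θ = r}

/-- Empirical model rank: rank of the empirical tangent matrix. -/
noncomputable def empRank (f : α → (ι → ℝ) → ℝ) (θ : ι → ℝ) {n : ℕ} (X : Fin n → α) : ℕ :=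
  (Matrix.of fun (i : ι) (j : Fin n) => pgrad f θ i (X j)).rank

/-- Optimistic sample size: the smallest sample size with LLR-guarantee. -/
noncomputable def optSampleSize (ℓ : ℝ → ℝ → ℝ) (f : α → (ι → ℝ) → ℝ) (fstar : α → ℝ) : ℕ :=
  sInf {n | HasLLR ℓ f fstar n}

end Core

section AuxLemmas

variable {α : Type*} {ι : Type*} [Fintype ι] [DecidableEq ι]

lemma empLoss_nonneg (ℓ : ℝ → ℝ → ℝ) (hℓ : IsDistanceLoss ℓ) {n : ℕ} (X : Fin n → α)
    (fstar g : α → ℝ) : 0 ≤ empLoss ℓ X fstar g := by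
  refine mul_nonneg (by positivity) (Finset.sum_nonneg fun i _ => (hℓ.2 _ _).1)

lemma empLoss_self (ℓ : ℝ → ℝ → ℝ) (hℓ : IsDistanceLoss ℓ) {n : ℕ} (X : Fin n → α)
    (fstar : α → ℝ) : empLoss ℓ X fstar fstar = 0 := by
  unfold empLoss
  rw [Finset.sum_eq_zero, mul_zero]
  exact fun i _ => ((hℓ.2 _ _).2).mpr rfl

lemma empLoss_eq_zero_iff (ℓ : ℝ → ℝ → ℝ) (hℓ : IsDistanceLoss ℓ) {n : ℕ} (X : Fin n → α)
    (fstar g : α → ℝ) : empLoss ℓ X fstar g = 0 ↔ ∀ i, g (X i) = fstar (X i) := by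
  rcases Nat.eq_zero_or_pos n with h | h
  · subst h
    simp [empLoss]
  · have hn : (1 / n : ℝ) ≠ 0 := by positivity
    unfold empLoss
    rw [mul_eq_zero, or_iff_right hn,
      Finset.sum_eq_zero_iff_of_nonneg (fun i _ => (hℓ.2 _ _).1)]
    constructor
    · exact fun H i => ((hℓ.2 _ _).2).mp (H i (Finset.mem_univ i))
    · exact fun H i _ => ((hℓ.2 _ _).2).mpr (H i)

/-- Characterization of the LLR-guarantee via injectivity of evaluation on the span. -/
lemma llrAt_iff_sep (ℓ : ℝ → ℝ → ℝ) (hℓ : IsDistanceLoss ℓ) (f : α → (ι → ℝ) → ℝ)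
    (θ : ι → ℝ) {n : ℕ} (X : Fin n → α) (fstar : α → ℝ)
    (htarget : (fun x => f x θ) = fstar) :
    LLRAt ℓ f θ X fstar ↔
      ∀ v ∈ Submodule.span ℝ (Set.range (pgrad f θ)), (∀ i, v (X i) = 0) → v = 0 := by
  have hfx : ∀ x, f x θ = fstar x := fun x => congrFun htarget x
  have hfmem : fstar ∈ tangentSet f θ := by
    refine ⟨0, funext fun x => ?_⟩
    simp [hfx x]
  -- correspondence between tangent set elements and span elements
  have key : ∀ g : α → ℝ, g ∈ tangentSet f θ ↔
      ∃ v ∈ Submodule.span ℝ (Set.range (pgrad f θ)), g = fun x => fstar x + v x := by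
    intro g
    constructor
    · rintro ⟨a, rfl⟩
      refine ⟨fun x => ∑ i, a i * pgrad f θ i x, ?_, ?_⟩
      · rw [Submodule.mem_span_range_iff_exists_fun]
        refine ⟨a, ?_⟩
        funext x
        simp [Finset.sum_apply]
      · funext x; simp [hfx x]
    · rintro ⟨v, hv, rfl⟩
      rw [Submodule.mem_span_range_iff_exists_fun] at hv
      obtain ⟨a, rfl⟩ := hv
      refine ⟨a, funext fun x => ?_⟩
      simp [hfx x, Finset.sum_apply]
  -- minimizers are exactly those agreeing with fstar on the sample
  have hmin : ∀ g : α → ℝ,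
      (∀ h ∈ tangentSet f θ, empLoss ℓ X fstar g ≤ empLoss ℓ X fstar h) ↔
      (∀ i, g (X i) = fstar (X i)) := by
    intro g
    constructor
    · intro H
      rw [← empLoss_eq_zero_iff ℓ hℓ]
      have h1 := H fstar hfmem
      rw [empLoss_self ℓ hℓ] at h1
      exact le_antisymm h1 (empLoss_nonneg ℓ hℓ X fstar g)
    · intro H h hh
      rw [(empLoss_eq_zero_iff ℓ hℓ X fstar g).mpr H]
      exact empLoss_nonneg ℓ hℓ X fstar h
  constructor
  · rintro ⟨-, -, huniq⟩ v hv hvz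
    have hg : (fun x => fstar x + v x) ∈ tangentSet f θ := (key _).mpr ⟨v, hv, rfl⟩
    have := huniq _ hg ((hmin _).mpr (by intro i; rw [hvz i, add_zero]))
    funext x
    have := congrFun this x
    simpa using this
  · intro hsep
    refine ⟨hfmem, ?_, ?_⟩
    · intro h hh
      rw [empLoss_self ℓ hℓ]
      exact empLoss_nonneg ℓ hℓ X fstar h
    · intro g hg hmg
      obtain ⟨v, hv, rfl⟩ := (key g).mp hg
      have hagree := (hmin _).mp hmg
      have hvz : v = 0 := hsep v hv (fun i => by
        have := hagree i
        simpa using this)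
      funext x
      simp [hvz]

/-- For a finite-dimensional space of functions, finitely many points separate it from zero. -/
lemma exists_separating_points (α : Type*) [Nonempty α] :
    ∀ r : ℕ, ∀ V : Submodule ℝ (α → ℝ), FiniteDimensional ℝ V → Module.finrank ℝ V ≤ r →
    ∃ x : Fin r → α, ∀ v ∈ V, (∀ k, v (x k) = 0) → v = 0 := by
  intro r
  induction r with
  | zero =>
    intro V hfd hr
    have : V = ⊥ := Submodule.finrank_eq_zero.mp (Nat.le_zero.mp hr)
    exact ⟨Fin.elim0, fun v hv _ => by simpa [this] using hv⟩
  | succ r ih =>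
    intro V hfd hr
    by_cases hV : ∀ v ∈ V, v = 0
    · exact ⟨fun _ => Classical.arbitrary α, fun v hv _ => hV v hv⟩
    · push_neg at hV
      obtain ⟨v0, hv0V, hv0⟩ := hV
      obtain ⟨x0, hx0⟩ : ∃ x0, v0 x0 ≠ 0 := by
        by_contra h
        push_neg at h
        exact hv0 (funext h)
      set V' : Submodule ℝ (α → ℝ) := V ⊓ LinearMap.ker (LinearMap.proj (R := ℝ) x0) with hV'
      have hle : V' ≤ V := inf_le_left
      have hfd' : FiniteDimensional ℝ V' := Submodule.finiteDimensional_of_le hle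
      have hlt : V' < V := by
        refine lt_of_le_of_ne hle fun h => ?_
        have : v0 ∈ V' := h ▸ hv0V
        exact hx0 this.2
      have hr' : Module.finrank ℝ V' ≤ r :=
        Nat.lt_succ_iff.mp (lt_of_lt_of_le (Submodule.finrank_lt_finrank_of_lt hlt) hr)
      obtain ⟨x, hx⟩ := ih V' hfd' hr'
      refine ⟨Fin.cons x0 x, fun v hv hvz => ?_⟩
      refine hx v ⟨hv, ?_⟩ fun k => ?_
      · have := hvz 0
        simpa using this
      · have := hvz k.succ
        simpa using this

end AuxLemmas

/-- phase transition of the LLR-guarantee at a target point. -/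
theorem llr_phase_transition {d M : ℕ} (ℓ : ℝ → ℝ → ℝ) (hℓ : IsDistanceLoss ℓ)
    (f : (Fin d → ℝ) → (Fin M → ℝ) → ℝ) (hdiff : ∀ x, Differentiable ℝ (f x))
    (θ' : Fin M → ℝ) (fstar : (Fin d → ℝ) → ℝ)
    (htarget : (fun x => f x θ') = fstar) (n : ℕ) :
    (n < modelRankAt f θ' → ∀ X : Fin n → Fin d → ℝ, ¬ LLRAt ℓ f θ' X fstar) ∧
    (modelRankAt f θ' ≤ n → ∃ X : Fin n → Fin d → ℝ, LLRAt ℓ f θ' X fstar) := by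
  have hfd : FiniteDimensional ℝ (Submodule.span ℝ (Set.range (pgrad f θ'))) :=
    FiniteDimensional.span_of_finite ℝ (Set.finite_range _)
  constructor
  · intro hn X hLLR
    rw [llrAt_iff_sep ℓ hℓ f θ' X fstar htarget] at hLLR
    set V := Submodule.span ℝ (Set.range (pgrad f θ'))
    let Φ : V →ₗ[ℝ] (Fin n → ℝ) :=
      (LinearMap.pi fun i => LinearMap.proj (R := ℝ) (X i)).comp V.subtype
    have hinj : Function.Injective Φ := by
      rw [← LinearMap.ker_eq_bot, eq_bot_iff]
      rintro ⟨v, hv⟩ hker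
      have : ∀ i, v (X i) = 0 := fun i => congrFun hker i
      have hv0 : v = 0 := hLLR v hv this
      exact Subtype.ext hv0
    have := LinearMap.finrank_le_finrank_of_injective hinj
    rw [Module.finrank_pi] at this
    simp only [Fintype.card_fin] at this
    exact absurd this (not_le.mpr hn)
  · intro hn
    obtain ⟨X, hX⟩ := exists_separating_points (Fin d → ℝ) n
      (Submodule.span ℝ (Set.range (pgrad f θ'))) hfd hn
    exact ⟨X, (llrAt_iff_sep ℓ hℓ f θ' X fstar htarget).mpr hX⟩
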